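/- Let H be a group that is not logically noetherian. Then there exist a type ι and an ultrafilter u on ι such that the ultrapower Filter.Germ (↑u) H (the quotient of the direct power ι → H by u-almost-everywhere equality, with its natural group structure) satisfies exactly the same quasi-identities as H, but is not geometrically equivalent to H. -/

import Mathlib

/-- The `H`-closure of a set `S` of elements of the free group on `n` generators. -/
def GClosure (H : Type*) [Group H] {n : ℕ} (S : Set (FreeGroup (Fin n))) :
    Set (FreeGroup (Fin n)) :=
  {w | ∀ φ : FreeGroup (Fin n) →* H, (∀ s ∈ S, φ s = 1) → φ w = 1}

/-- The quasi-identity `(S₀, w₀)` holds in the group `G`. -/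
def QuasiIdHolds (G : Type*) [Group G] {n : ℕ}
    (S₀ : Finset (FreeGroup (Fin n))) (w₀ : FreeGroup (Fin n)) : Prop :=
  ∀ φ : FreeGroup (Fin n) →* G, (∀ s ∈ S₀, φ s = 1) → φ w₀ = 1

/-- A group `H` is logically noetherian. -/
def LogicallyNoetherian (H : Type*) [Group H] : Prop :=
  ∀ (n : ℕ) (S : Set (FreeGroup (Fin n))) (w : FreeGroup (Fin n)),
    w ∈ GClosure H S →
      ∃ S₀ : Finset (FreeGroup (Fin n)), ↑S₀ ⊆ S ∧ w ∈ GClosure H (S₀ : Set (FreeGroup (Fin n)))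

/-- Groups `H₁` and `H₂` are geometrically equivalent: all `H₁`-closures and `H₂`-closures
coincide. -/
def GeomEquivalent (H₁ H₂ : Type*) [Group H₁] [Group H₂] : Prop :=
  ∀ (n : ℕ) (S : Set (FreeGroup (Fin n))), GClosure H₁ S = GClosure H₂ S

open Filter in
/-- If `H` is not logically noetherian then some ultrapower of `H` has the same
quasi-identities as `H` but is not geometrically equivalent to `H`. -/
theorem exists_ultrapower_not_geomEquivalent (H : Type) [Group H]
    (h : ¬ LogicallyNoetherian H) :
    ∃ (ι : Type) (u : Ultrafilter ι),
      (∀ (n : ℕ) (S₀ : Finset (FreeGroup (Fin n))) (w₀ : FreeGroup (Fin n)),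
          QuasiIdHolds H S₀ w₀ ↔ QuasiIdHolds (Filter.Germ (↑u : Filter ι) H) S₀ w₀) ∧
      ¬ GeomEquivalent H (Filter.Germ (↑u : Filter ι) H) := by
  simp only [LogicallyNoetherian, not_forall] at h
  obtain ⟨n, S, w, hw, hfin⟩ := h
  push_neg at hfin
  -- index type: finite subsets of S
  let ι : Type := {T : Finset (FreeGroup (Fin n)) // ↑T ⊆ S}
  letI : SemilatticeSup ι :=
    Subtype.semilatticeSup (fun x y hx hy => by
      rw [Finset.sup_eq_union, Finset.coe_union]; exact Set.union_subset hx hy)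
  haveI : Nonempty ι := ⟨⟨∅, by simp⟩⟩
  haveI : IsDirected ι (· ≤ ·) := by exact SemilatticeSup.instIsDirectedOrder
  haveI : (atTop : Filter ι).NeBot := atTop_neBot
  let u : Ultrafilter ι := Ultrafilter.of atTop
  have hatTop : ∀ A ∈ (atTop : Filter ι), A ∈ u := fun A hA => Ultrafilter.of_le atTop hA
  -- for each i, a hom killing i but not w
  have hchoice : ∀ i : ι, ∃ φ : FreeGroup (Fin n) →* H,
      (∀ s ∈ (i.1 : Set (FreeGroup (Fin n))), φ s = 1) ∧ φ w ≠ 1 := by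
    intro i
    have := hfin i.1 i.2
    simp only [GClosure, Set.mem_setOf_eq, not_forall] at this
    obtain ⟨φ, h1, h2⟩ := this
    exact ⟨φ, h1, h2⟩
  choose φi hφ1 hφw using hchoice
  refine ⟨ι, u, ?_, ?_⟩
  · -- same quasi-identities
    intro m S₀ w₀
    constructor
    · intro hqi ψ hψ
      -- choose representatives of the images of generators
      have hrep : ∀ j : Fin m, ∃ g : ι → H,
          ((g : Germ (↑u : Filter ι) H)) = ψ (FreeGroup.of j) := fun j =>
        Quotient.exists_rep _
      choose f hf using hrep
      set Ψ : FreeGroup (Fin m) →* (ι → H) := FreeGroup.lift f with hΨ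
      have hcomp : (Filter.Germ.coeMulHom (↑u : Filter ι)).comp Ψ = ψ := by
        apply FreeGroup.ext_hom
        intro a
        simp [hΨ, Filter.Germ.coeMulHom, hf a]
        exact hf a
      have key : ∀ᶠ i in (↑u : Filter ι), ∀ s ∈ S₀, Ψ s i = 1 := by
        rw [Filter.eventually_all_finset]
        intro s hs
        have : ((Ψ s : ι → H) : Germ (↑u : Filter ι) H) = 1 := by
          have := hψ s hs
          rw [← hcomp] at this
          exact this
        rw [← Filter.Germ.coe_one, Filter.Germ.coe_eq] at this
        exact this
      have key2 : ∀ᶠ i in (↑u : Filter ι), Ψ w₀ i = 1 := by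
        filter_upwards [key] with i hi
        exact hqi ((Pi.evalMonoidHom (fun _ => H) i).comp Ψ) (fun s hs => hi s hs)
      rw [← hcomp]
      show ((Ψ w₀ : ι → H) : Germ (↑u : Filter ι) H) = 1
      rw [← Filter.Germ.coe_one, Filter.Germ.coe_eq]
      exact key2
    · intro hqi φ hφ
      set c : H →* Germ (↑u : Filter ι) H :=
        (Filter.Germ.coeMulHom (↑u : Filter ι)).comp (Pi.constMonoidHom ι H) with hc
      have := hqi (c.comp φ) (fun s hs => by simp [hφ s hs])
      have h1 : c (φ w₀) = c 1 := by simpa using this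
      have hcinj : Function.Injective c := by
        intro a b hab
        have : (↑a : Germ (↑u : Filter ι) H) = ↑b := hab
        exact Filter.Germ.const_inj.mp this
      exact hcinj h1
  · -- not geometrically equivalent
    intro hge
    have hcl := hge n S
    rw [hcl] at hw
    set Φ : FreeGroup (Fin n) →* Germ (↑u : Filter ι) H :=
      (Filter.Germ.coeMulHom (↑u : Filter ι)).comp (Pi.monoidHom φi) with hΦ
    have hΦs : ∀ s ∈ S, Φ s = 1 := by
      intro s hs
      have hmem : {i : ι | s ∈ i.1} ∈ (↑u : Filter ι) := by
        apply hatTop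
        refine Filter.mem_atTop_sets.mpr ⟨⟨{s}, by simpa using hs⟩, ?_⟩
        intro b hb
        exact hb (Finset.mem_singleton_self s)
      show ((fun i => φi i s : ι → H) : Germ (↑u : Filter ι) H) = 1
      rw [← Filter.Germ.coe_one, Filter.Germ.coe_eq]
      filter_upwards [hmem] with i hi
      exact hφ1 i s hi
    have : Φ w = 1 := hw Φ hΦs
    have : ∀ᶠ i in (↑u : Filter ι), φi i w = 1 := by
      rw [show Φ w = ((fun i => φi i w : ι → H) : Germ (↑u : Filter ι) H) from rfl,
        ← Filter.Germ.coe_one, Filter.Germ.coe_eq] at this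
      exact this
    obtain ⟨i, hi⟩ := this.exists
    exact hφw i hi
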